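/- Let N be a positive integer and s₀, s₁, s₂ positive integers with s₀ + s₁ + s₂ = N. Extend s to indices in ℤ/12 by s_i = s_j whenever i ≡ j (mod 3). If there exist nonnegative integers λ₀,...,λ₁₁ (indexed by ℤ/12) such that for every i ∈ ℤ/12, s_i = λ_{i-3} + λ_{i-2} + λ_{i-1} + λ_i (indices mod 12), then max(s₀, s₁, s₂) ≤ 2·min(s₀, s₁, s₂). -/

import Mathlib

/-- necessity of `max ≤ 2·min` for solvability of the cyclic
12-equation Diophantine system of the 3-user BIA problem. -/
theorem stmt_0 (N s0 s1 s2 : ℕ) (hN : 0 < N)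
    (h0 : 0 < s0) (h1 : 0 < s1) (h2 : 0 < s2)
    (hsum : s0 + s1 + s2 = N)
    (s : ZMod 12 → ℕ)
    (hs : ∀ i : ZMod 12,
      s i = if i.val % 3 = 0 then s0 else if i.val % 3 = 1 then s1 else s2)
    (hlam : ∃ lam : ZMod 12 → ℕ,
      ∀ i : ZMod 12, s i = lam (i - 3) + lam (i - 2) + lam (i - 1) + lam i) :
    max s0 (max s1 s2) ≤ 2 * min s0 (min s1 s2) := by
  obtain ⟨lam, hl⟩ := hlam
  have e0 : s0 = lam 9 + lam 10 + lam 11 + lam 0 := by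
    have h := hl 0
    rw [show ((0:ZMod 12) - 3) = 9 from by decide,
        show ((0:ZMod 12) - 2) = 10 from by decide,
        show ((0:ZMod 12) - 1) = 11 from by decide, hs] at h
    simpa [ZMod.val_ofNat] using h
  have e1 : s1 = lam 10 + lam 11 + lam 0 + lam 1 := by
    have h := hl 1
    rw [show ((1:ZMod 12) - 3) = 10 from by decide,
        show ((1:ZMod 12) - 2) = 11 from by decide,
        show ((1:ZMod 12) - 1) = 0 from by decide, hs] at h
    simpa [ZMod.val_ofNat, ZMod.val_one_eq_one_mod] using h
  have e2 : s2 = lam 11 + lam 0 + lam 1 + lam 2 := by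
    have h := hl 2
    rw [show ((2:ZMod 12) - 3) = 11 from by decide,
        show ((2:ZMod 12) - 2) = 0 from by decide,
        show ((2:ZMod 12) - 1) = 1 from by decide, hs] at h
    simpa [ZMod.val_ofNat] using h
  have e3 : s0 = lam 0 + lam 1 + lam 2 + lam 3 := by
    have h := hl 3
    rw [show ((3:ZMod 12) - 3) = 0 from by decide,
        show ((3:ZMod 12) - 2) = 1 from by decide,
        show ((3:ZMod 12) - 1) = 2 from by decide, hs] at h
    simpa [ZMod.val_ofNat] using h
  have e4 : s1 = lam 1 + lam 2 + lam 3 + lam 4 := by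
    have h := hl 4
    rw [show ((4:ZMod 12) - 3) = 1 from by decide,
        show ((4:ZMod 12) - 2) = 2 from by decide,
        show ((4:ZMod 12) - 1) = 3 from by decide, hs] at h
    simpa [ZMod.val_ofNat] using h
  have e5 : s2 = lam 2 + lam 3 + lam 4 + lam 5 := by
    have h := hl 5
    rw [show ((5:ZMod 12) - 3) = 2 from by decide,
        show ((5:ZMod 12) - 2) = 3 from by decide,
        show ((5:ZMod 12) - 1) = 4 from by decide, hs] at h
    simpa [ZMod.val_ofNat] using h
  have e6 : s0 = lam 3 + lam 4 + lam 5 + lam 6 := by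
    have h := hl 6
    rw [show ((6:ZMod 12) - 3) = 3 from by decide,
        show ((6:ZMod 12) - 2) = 4 from by decide,
        show ((6:ZMod 12) - 1) = 5 from by decide, hs] at h
    simpa [ZMod.val_ofNat] using h
  have e7 : s1 = lam 4 + lam 5 + lam 6 + lam 7 := by
    have h := hl 7
    rw [show ((7:ZMod 12) - 3) = 4 from by decide,
        show ((7:ZMod 12) - 2) = 5 from by decide,
        show ((7:ZMod 12) - 1) = 6 from by decide, hs] at h
    simpa [ZMod.val_ofNat] using h
  have e8 : s2 = lam 5 + lam 6 + lam 7 + lam 8 := by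
    have h := hl 8
    rw [show ((8:ZMod 12) - 3) = 5 from by decide,
        show ((8:ZMod 12) - 2) = 6 from by decide,
        show ((8:ZMod 12) - 1) = 7 from by decide, hs] at h
    simpa [ZMod.val_ofNat] using h
  have e9 : s0 = lam 6 + lam 7 + lam 8 + lam 9 := by
    have h := hl 9
    rw [show ((9:ZMod 12) - 3) = 6 from by decide,
        show ((9:ZMod 12) - 2) = 7 from by decide,
        show ((9:ZMod 12) - 1) = 8 from by decide, hs] at h
    simpa [ZMod.val_ofNat] using h
  have e10 : s1 = lam 7 + lam 8 + lam 9 + lam 10 := by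
    have h := hl 10
    rw [show ((10:ZMod 12) - 3) = 7 from by decide,
        show ((10:ZMod 12) - 2) = 8 from by decide,
        show ((10:ZMod 12) - 1) = 9 from by decide, hs] at h
    simpa [ZMod.val_ofNat] using h
  have e11 : s2 = lam 8 + lam 9 + lam 10 + lam 11 := by
    have h := hl 11
    rw [show ((11:ZMod 12) - 3) = 8 from by decide,
        show ((11:ZMod 12) - 2) = 9 from by decide,
        show ((11:ZMod 12) - 1) = 10 from by decide, hs] at h
    simpa [ZMod.val_ofNat] using h
  omega
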